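/- For θ = (m, σ) with m ∈ ℝ, σ > 0, let p_θ(x) = (2πσ²)^{−1/2} exp(−(x − m)²/(2σ²)) be the N(m, σ²) density, and for n ≥ 1 let p_θ(xⁿ) = ∏_{i=1}^n p_θ(x_i) be the corresponding product density on ℝⁿ. Then for every n ≥ 1, the Yatracos class 𝒜_n = { { xⁿ ∈ ℝⁿ : p_θ(xⁿ) > p_{θ'}(xⁿ) } : θ ≠ θ' } is a VC class with VC dimension at most 12 log₂(12 e). -/

import Mathlib

open scoped Real

/-- A collection `𝒞` of subsets of `Z` shatters a finite set `S` if for every `B ⊆ S` there is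
`A ∈ 𝒞` with `A ∩ S = B`. -/
def Shatters {Z : Type*} (𝒞 : Set (Set Z)) (S : Finset Z) : Prop :=
  ∀ B ⊆ S, ∃ A ∈ 𝒞, ∀ z ∈ S, z ∈ A ↔ z ∈ B

/-- The `N(m,σ²)` density on `ℝ`. -/
noncomputable def gaussDensity (m σ x : ℝ) : ℝ :=
  (Real.sqrt (2 * π * σ ^ 2))⁻¹ * Real.exp (-(x - m) ^ 2 / (2 * σ ^ 2))

lemma gauss_pos (m σ x : ℝ) (hσ : 0 < σ) : 0 < gaussDensity m σ x := by
  unfold gaussDensity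
  have : (0:ℝ) < 2 * π * σ ^ 2 := by positivity
  positivity

lemma gauss_log (m σ x : ℝ) (hσ : 0 < σ) :
    Real.log (gaussDensity m σ x) =
      -(Real.log (2 * π) / 2) - Real.log σ - (x - m) ^ 2 / (2 * σ ^ 2) := by
  have h1 : (0:ℝ) < 2 * π * σ ^ 2 := by positivity
  have h2 : (2 * π : ℝ) ≠ 0 := by positivity
  unfold gaussDensity
  rw [Real.log_mul (by positivity) (Real.exp_ne_zero _), Real.log_inv, Real.log_exp,
    Real.log_sqrt h1.le, Real.log_mul h2 (by positivity), Real.log_pow]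
  ring

lemma gauss_rep (m σ m' σ' : ℝ) (hσ : 0 < σ) (hσ' : 0 < σ') {n : ℕ} (x : Fin n → ℝ) :
    ((∏ i, gaussDensity m' σ' (x i) < ∏ i, gaussDensity m σ (x i)) ↔
      0 < (1/(2*σ'^2) - 1/(2*σ^2)) * (∑ i, (x i)^2) + (m/σ^2 - m'/σ'^2) * (∑ i, x i)
          + (n : ℝ) * (m'^2/(2*σ'^2) - m^2/(2*σ^2) + Real.log σ' - Real.log σ)) := by
  have hp : 0 < ∏ i, gaussDensity m σ (x i) :=
    Finset.prod_pos fun i _ => gauss_pos _ _ _ hσ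
  have hp' : 0 < ∏ i, gaussDensity m' σ' (x i) :=
    Finset.prod_pos fun i _ => gauss_pos _ _ _ hσ'
  rw [← Real.log_lt_log_iff hp' hp, ← sub_pos,
    Real.log_prod (fun i _ => (gauss_pos _ _ _ hσ).ne'),
    Real.log_prod (fun i _ => (gauss_pos _ _ _ hσ').ne'), ← Finset.sum_sub_distrib]
  have key : ∀ t : ℝ, Real.log (gaussDensity m σ t) - Real.log (gaussDensity m' σ' t)
      = (1/(2*σ'^2) - 1/(2*σ^2)) * t^2 + (m/σ^2 - m'/σ'^2) * t
        + (m'^2/(2*σ'^2) - m^2/(2*σ^2) + Real.log σ' - Real.log σ) := by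
    intro t
    rw [gauss_log _ _ _ hσ, gauss_log _ _ _ hσ']
    have h1 : σ ^ 2 ≠ 0 := by positivity
    have h2 : σ' ^ 2 ≠ 0 := by positivity
    field_simp
    ring
  have : ∑ i, (Real.log (gaussDensity m σ (x i)) - Real.log (gaussDensity m' σ' (x i)))
      = (1/(2*σ'^2) - 1/(2*σ^2)) * (∑ i, (x i)^2) + (m/σ^2 - m'/σ'^2) * (∑ i, x i)
        + (n : ℝ) * (m'^2/(2*σ'^2) - m^2/(2*σ^2) + Real.log σ' - Real.log σ) := by
    simp only [key, Finset.sum_add_distrib, Finset.mul_sum, Finset.sum_const,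
      Finset.card_univ, Fintype.card_fin, nsmul_eq_mul]
  rw [this]

/-- Key lemma: given a linear dependence with a strictly negative coefficient among the
feature vectors of points of `S`, the Gaussian Yatracos class cannot shatter `S`. -/
lemma no_shatter_of_dep {n : ℕ} (𝒜 : Set (Set (Fin n → ℝ)))
    (h𝒜 : 𝒜 = {A | ∃ m σ m' σ' : ℝ, 0 < σ ∧ 0 < σ' ∧ (m, σ) ≠ (m', σ') ∧
      A = {x | ∏ i, gaussDensity m' σ' (x i) < ∏ i, gaussDensity m σ (x i)}})
    (S : Finset (Fin n → ℝ)) (hS : Shatters 𝒜 S)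
    (v : (Fin n → ℝ) → (Fin 3 → ℝ))
    (hv : v = fun x => ![∑ i, (x i)^2, ∑ i, x i, 1])
    (g : {z // z ∈ S} → ℝ) (hsum : ∑ z : {z // z ∈ S}, g z • v z = 0)
    (hneg : ∃ z, g z < 0) : False := by
  classical
  obtain ⟨z₁, hz₁⟩ := hneg
  set B : Finset (Fin n → ℝ) :=
    S.filter (fun x => ∃ h : x ∈ S, g ⟨x, h⟩ ≤ 0) with hB
  obtain ⟨A, hA𝒜, hAB⟩ := hS B (Finset.filter_subset _ _)
  rw [h𝒜] at hA𝒜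
  obtain ⟨m, σ, m', σ', hσ, hσ', hne, rfl⟩ := hA𝒜
  set c : ℝ := (n : ℝ) * (m'^2/(2*σ'^2) - m^2/(2*σ^2) + Real.log σ' - Real.log σ) with hc
  set f : (Fin n → ℝ) → ℝ := fun x => (1/(2*σ'^2) - 1/(2*σ^2)) * v x 0
      + (m/σ^2 - m'/σ'^2) * v x 1 + c * v x 2 with hf
  have hfeq : ∀ x : Fin n → ℝ, f x = (1/(2*σ'^2) - 1/(2*σ^2)) * (∑ i, (x i)^2)
      + (m/σ^2 - m'/σ'^2) * (∑ i, x i)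
      + (n : ℝ) * (m'^2/(2*σ'^2) - m^2/(2*σ^2) + Real.log σ' - Real.log σ) := by
    intro x
    simp only [hf, hv, hc, Matrix.cons_val_zero, Matrix.cons_val_one, Matrix.head_cons,
      Matrix.cons_val_two, Matrix.tail_cons, mul_one]
  -- membership characterization
  have hmem : ∀ z : {z // z ∈ S}, (0 < f z ↔ g z ≤ 0) := by
    intro z
    have h1 := hAB z z.2
    have h2 : (z : Fin n → ℝ) ∈ B ↔ g z ≤ 0 := by
      constructor
      · intro hm
        rw [hB, Finset.mem_filter] at hm
        obtain ⟨-, h, hh⟩ := hm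
        rwa [Subtype.coe_eta] at hh
      · intro hh
        rw [hB, Finset.mem_filter]
        exact ⟨z.2, z.2, by rwa [Subtype.coe_eta]⟩
    have h3 : ((z : Fin n → ℝ) ∈ {x | ∏ i, gaussDensity m' σ' (x i) < ∏ i, gaussDensity m σ (x i)})
        ↔ 0 < f z := by
      rw [Set.mem_setOf_eq, gauss_rep m σ m' σ' hσ hσ', ← hfeq]
    rw [← h3, h1, h2]
  -- the weighted sum of f vanishes
  have hcomp : ∀ j : Fin 3, ∑ z : {z // z ∈ S}, g z * v z j = 0 := by
    intro j
    have := congrFun hsum j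
    simpa [Finset.sum_apply] using this
  have hzero : ∑ z : {z // z ∈ S}, g z * f z = 0 := by
    have : ∑ z : {z // z ∈ S}, g z * f z
        = (1/(2*σ'^2) - 1/(2*σ^2)) * (∑ z : {z // z ∈ S}, g z * v z 0)
          + (m/σ^2 - m'/σ'^2) * (∑ z : {z // z ∈ S}, g z * v z 1)
          + c * (∑ z : {z // z ∈ S}, g z * v z 2) := by
      simp only [hf, Finset.mul_sum, ← Finset.sum_add_distrib]
      exact Finset.sum_congr rfl fun z _ => by ring
    rw [this, hcomp 0, hcomp 1, hcomp 2]; ring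
  -- but the weighted sum is strictly negative
  have hlt : ∑ z : {z // z ∈ S}, g z * f z < ∑ _z : {z // z ∈ S}, (0:ℝ) := by
    apply Finset.sum_lt_sum
    · intro z _
      rcases le_or_gt (g z) 0 with h | h
      · exact mul_nonpos_iff.mpr (Or.inr ⟨h, le_of_lt ((hmem z).mpr h)⟩)
      · have : ¬ 0 < f z := fun hc => absurd ((hmem z).mp hc) (not_le.mpr h)
        exact mul_nonpos_iff.mpr (Or.inl ⟨h.le, not_lt.mp this⟩)
    · exact ⟨z₁, Finset.mem_univ _, mul_neg_of_neg_of_pos hz₁ ((hmem z₁).mpr hz₁.le)⟩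
  simp only [Finset.sum_const, smul_zero] at hlt
  exact absurd hzero (ne_of_lt hlt)

/-- **VC dimension of the Gaussian Yatracos class.** For every `n ≥ 1`, the Yatracos class of
the `n`-fold product Gaussian densities, `𝒜_n = { {xⁿ : p_θ(xⁿ) > p_{θ'}(xⁿ)} : θ ≠ θ' }`
with `θ = (m,σ)`, `σ > 0`, is a VC class with VC dimension at most `12 log₂(12e)`. -/
theorem stmt_10 (n : ℕ) (hn : 1 ≤ n) (𝒜 : Set (Set (Fin n → ℝ)))
    (h𝒜 : 𝒜 = {A | ∃ m σ m' σ' : ℝ, 0 < σ ∧ 0 < σ' ∧ (m, σ) ≠ (m', σ') ∧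
      A = {x | ∏ i, gaussDensity m' σ' (x i) < ∏ i, gaussDensity m σ (x i)}}) :
    ∀ S : Finset (Fin n → ℝ), Shatters 𝒜 S →
      (S.card : ℝ) ≤ 12 * Real.logb 2 (12 * Real.exp 1) := by
  intro S hS
  have hbound : (3:ℝ) ≤ 12 * Real.logb 2 (12 * Real.exp 1) := by
    have h12 : (2:ℝ) ≤ 12 * Real.exp 1 := by nlinarith [Real.add_one_le_exp (1:ℝ)]
    have h1 : (1:ℝ) ≤ Real.logb 2 (12 * Real.exp 1) := by
      have := Real.logb_le_logb_of_le (b:=2) one_lt_two two_pos h12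
      simpa using this
    linarith
  have hcard : S.card ≤ 3 := by
    by_contra hc
    push_neg at hc
    set v : (Fin n → ℝ) → (Fin 3 → ℝ) := fun x => ![∑ i, (x i)^2, ∑ i, x i, 1] with hv
    have hni : ¬ LinearIndependent ℝ (fun z : {z // z ∈ S} => v z) := by
      intro h
      have := h.fintype_card_le_finrank
      rw [Fintype.card_coe] at this
      simp at this
      omega
    obtain ⟨g, hsum, z₀, hz₀⟩ := Fintype.not_linearIndependent_iff.mp hni
    rcases lt_or_gt_of_ne hz₀ with h | h
    · exact no_shatter_of_dep 𝒜 h𝒜 S hS v hv g hsum ⟨z₀, h⟩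
    · refine no_shatter_of_dep 𝒜 h𝒜 S hS v hv (fun z => -(g z)) ?_ ⟨z₀, by show -(g z₀) < 0; linarith⟩
      simp only [neg_smul, Finset.sum_neg_distrib, hsum, neg_zero]
  calc (S.card : ℝ) ≤ 3 := by exact_mod_cast hcard
    _ ≤ 12 * Real.logb 2 (12 * Real.exp 1) := hbound
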